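/- For any finite tree T there is a bijection between E_fix(T) and the set of fixed points c of the majority process on T with c(v*)=0, sending a fixed point c to its set of multichromatic edges {(u,w) : c(u)≠c(w)}. -/

import Mathlib

open SimpleGraph Finset
open scoped Classical

variable {V : Type*}

/-- Number of neighbors of `v` with the same color as `v`. -/
noncomputable def sameCount (G : SimpleGraph V) [Fintype V] (c : V → Bool) (v : V) : ℕ :=
  ((G.neighborFinset v).filter fun u => c u = c v).card

/-- Number of neighbors of `v` with the opposite color. -/
noncomputable def diffCount (G : SimpleGraph V) [Fintype V] (c : V → Bool) (v : V) : ℕ :=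
  ((G.neighborFinset v).filter fun u => c u ≠ c v).card

/-- One round of the minority process. -/
noncomputable def minStep (G : SimpleGraph V) [Fintype V] (c : V → Bool) : V → Bool :=
  fun v => if sameCount G c v ≤ diffCount G c v then c v else !c v

/-- One round of the majority process. -/
noncomputable def majStep (G : SimpleGraph V) [Fintype V] (c : V → Bool) : V → Bool :=
  fun v => if diffCount G c v ≤ sameCount G c v then c v else !c v

/-- Number of edges of `F` incident to `v`. -/
noncomputable def incCount (F : Finset (Sym2 V)) (v : V) : ℕ :=
  (F.filter fun e => v ∈ e).card

/-- The monochromatic edges of a coloring. -/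
noncomputable def monoEdges (G : SimpleGraph V) [Fintype V] (c : V → Bool) : Finset (Sym2 V) :=
  G.edgeFinset.filter fun e => ∀ x ∈ e, ∀ y ∈ e, c x = c y

/-- The multichromatic edges of a coloring. -/
noncomputable def multiEdges (G : SimpleGraph V) [Fintype V] (c : V → Bool) : Finset (Sym2 V) :=
  G.edgeFinset.filter fun e => ∃ x ∈ e, ∃ y ∈ e, c x ≠ c y

/-- Edges of `G` both of whose endpoints have degree at least 2. -/
noncomputable def Etwo (G : SimpleGraph V) [Fintype V] : Finset (Sym2 V) :=
  G.edgeFinset.filter fun e => ∀ x ∈ e, 2 ≤ G.degree x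

/-- `F` is legal: `F ⊆ E²(T)` and `F_v ≤ deg(v)/2` for every node. -/
def legalFix (G : SimpleGraph V) [Fintype V] (F : Finset (Sym2 V)) : Prop :=
  F ⊆ Etwo G ∧ ∀ v, 2 * incCount F v ≤ G.degree v

section Aux

variable {G : SimpleGraph V} [Fintype V]

lemma same_add_diff (G : SimpleGraph V) (c : V → Bool) (v : V) :
    sameCount G c v + diffCount G c v = G.degree v := by
  classical
  have := Finset.card_filter_add_card_filter_not
    (s := G.neighborFinset v) (p := fun u => c u = c v)
  simpa [sameCount, diffCount, SimpleGraph.card_neighborFinset_eq_degree] using this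

lemma mem_multiEdges {c : V → Bool} {u v : V} :
    s(u,v) ∈ multiEdges G c ↔ G.Adj u v ∧ c u ≠ c v := by
  unfold multiEdges
  rw [Finset.mem_filter, mem_edgeFinset, mem_edgeSet]
  constructor
  · rintro ⟨hadj, x, hx, y, hy, hxy⟩
    refine ⟨hadj, ?_⟩
    rw [Sym2.mem_iff] at hx hy
    rcases hx with rfl | rfl <;> rcases hy with rfl | rfl <;> simp_all
    · exact fun h => hxy h.symm
  · rintro ⟨hadj, hne⟩
    exact ⟨hadj, u, by simp, v, by simp, hne⟩

lemma diff_eq_inc (G : SimpleGraph V) (c : V → Bool) (v : V) :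
    diffCount G c v = incCount (multiEdges G c) v := by
  classical
  unfold diffCount incCount
  refine Finset.card_bij (fun u _ => s(v,u)) ?_ ?_ ?_
  · intro u hu
    rw [Finset.mem_filter, mem_neighborFinset] at hu
    rw [Finset.mem_filter]
    refine ⟨mem_multiEdges.2 ⟨hu.1, fun h => hu.2 h.symm⟩, by simp⟩
  · intro a ha b hb hab
    rw [Finset.mem_filter, mem_neighborFinset] at ha hb
    exact (Sym2.congr_right.1 hab)
  · intro e he
    rw [Finset.mem_filter] at he
    obtain ⟨hme, hve⟩ := he
    induction e using Sym2.ind with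
    | _ x y =>
      rw [mem_multiEdges] at hme
      rw [Sym2.mem_iff] at hve
      rcases hve with rfl | rfl
      · refine ⟨y, ?_, rfl⟩
        rw [Finset.mem_filter, mem_neighborFinset]
        exact ⟨hme.1, fun h => hme.2 h.symm⟩
      · refine ⟨x, ?_, Sym2.eq_swap⟩
        rw [Finset.mem_filter, mem_neighborFinset]
        exact ⟨hme.1.symm, hme.2⟩

lemma fixed_iff {c : V → Bool} :
    majStep G c = c ↔ ∀ v, diffCount G c v ≤ sameCount G c v := by
  constructor
  · intro h v
    by_contra hv
    have := congrFun h v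
    rw [majStep, if_neg hv] at this
    exact (Bool.not_ne_self (c v)) this
  · intro h
    funext v
    rw [majStep, if_pos (h v)]

/-- The unique path from `vstar` to `v` in a tree. -/
noncomputable def pathTo (hT : G.IsTree) (vstar v : V) : G.Walk vstar v :=
  (hT.existsUnique_path vstar v).choose

lemma pathTo_isPath (hT : G.IsTree) (vstar v : V) : (pathTo hT vstar v).IsPath :=
  (hT.existsUnique_path vstar v).choose_spec.1

lemma pathTo_eq (hT : G.IsTree) {vstar v : V} (q : G.Walk vstar v) (hq : q.IsPath) :
    q = pathTo hT vstar v :=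
  (hT.existsUnique_path vstar v).choose_spec.2 q hq

lemma isPath_concat' {u v w : V} {p : G.Walk u v} (hp : p.IsPath) (h : G.Adj v w)
    (hw : w ∉ p.support) : (p.concat h).IsPath := by
  rw [← Walk.isPath_reverse_iff, Walk.reverse_concat]
  exact ((Walk.isPath_reverse_iff p).2 hp).cons (by simpa [Walk.support_reverse] using hw)

lemma pathTo_step (hT : G.IsTree) (vstar : V) {u v : V} (h : G.Adj u v) :
    pathTo hT vstar v = (pathTo hT vstar u).concat h ∨
    pathTo hT vstar u = (pathTo hT vstar v).concat h.symm := by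
  classical
  by_cases hu : u ∈ (pathTo hT vstar v).support
  · left
    have hpPath : (pathTo hT vstar v).IsPath := pathTo_isPath hT vstar v
    generalize hpdef : pathTo hT vstar v = p at *
    have hq : (p.takeUntil u hu).IsPath := hpPath.takeUntil hu
    have hvq : v ∉ (p.takeUntil u hu).support := by
      intro hv
      have hsup : p.support = (p.takeUntil u hu).support ++ (p.dropUntil u hu).support.tail := by
        rw [← Walk.support_append, p.take_spec hu]
      have hnd := hpPath.support_nodup
      rw [hsup, List.nodup_append] at hnd
      have hvd : v ∈ (p.dropUntil u hu).support.tail := by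
        have hv' : v ∈ (p.dropUntil u hu).support := Walk.end_mem_support _
        rw [Walk.mem_support_iff] at hv'
        rcases hv' with rfl | hv' 
        · exact absurd rfl h.ne
        · exact hv'
      exact hnd.2.2 v hv v hvd rfl
    have hcp : ((p.takeUntil u hu).concat h).IsPath := isPath_concat' hq h hvq
    have h1 := pathTo_eq hT _ hcp
    have h2 := pathTo_eq hT _ hq
    rw [← hpdef, ← h1, ← h2]
  · right
    exact (pathTo_eq hT _ (isPath_concat' (pathTo_isPath hT vstar v) h.symm hu)).symm

/-- Number of `F`-edges along a walk. -/
noncomputable def ecount (F : Finset (Sym2 V)) {x y : V} (p : G.Walk x y) : ℕ :=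
  p.edges.countP (fun e => decide (e ∈ F))

lemma ecount_concat (F : Finset (Sym2 V)) {x y z : V} (p : G.Walk x y) (h : G.Adj y z) :
    ecount F (p.concat h) = ecount F p + (if s(y,z) ∈ F then 1 else 0) := by
  unfold ecount
  rw [Walk.edges_concat, List.concat_eq_append, List.countP_append]
  congr 1
  by_cases hf : s(y,z) ∈ F <;> simp [hf, List.countP_cons]

/-- The coloring determined by parity of `F`-edges on the path from `vstar`. -/
noncomputable def col (hT : G.IsTree) (F : Finset (Sym2 V)) (vstar v : V) : Bool :=
  decide (Odd (ecount F (pathTo hT vstar v)))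

lemma col_vstar (hT : G.IsTree) (F : Finset (Sym2 V)) (vstar : V) :
    col hT F vstar vstar = false := by
  have : (Walk.nil : G.Walk vstar vstar) = pathTo hT vstar vstar :=
    pathTo_eq hT _ Walk.IsPath.nil
  unfold col
  rw [← this]
  simp [ecount]

lemma col_adj (hT : G.IsTree) (F : Finset (Sym2 V)) (vstar : V) {u v : V} (h : G.Adj u v) :
    (col hT F vstar u = col hT F vstar v) ↔ s(u,v) ∉ F := by
  rcases pathTo_step hT vstar h with heq | heq
  · have hc := congrArg (ecount F) heq
    rw [ecount_concat] at hc
    unfold col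
    rw [hc, decide_eq_decide]
    by_cases hf : s(u,v) ∈ F <;> simp [hf, Nat.odd_add_one, Nat.odd_iff] <;> omega
  · have hc := congrArg (ecount F) heq
    rw [ecount_concat] at hc
    unfold col
    rw [hc, decide_eq_decide]
    by_cases hf : s(u,v) ∈ F
    · have hf' : s(v,u) ∈ F := by rwa [Sym2.eq_swap]
      simp only [hf, hf', if_true, Nat.odd_add_one, Nat.odd_iff, not_false_eq_true,
        iff_false, not_not]
      simp [Nat.odd_iff]
      omega
    · have hf' : s(v,u) ∉ F := by rwa [Sym2.eq_swap]
      simp [hf, hf']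

lemma multiEdges_col (hT : G.IsTree) (F : Finset (Sym2 V)) (hF : F ⊆ G.edgeFinset) (vstar : V) :
    multiEdges G (col hT F vstar) = F := by
  ext e
  induction e using Sym2.ind with
  | _ u v =>
    rw [mem_multiEdges]
    constructor
    · rintro ⟨hadj, hne⟩
      by_contra hf
      exact hne ((col_adj hT F vstar hadj).2 hf)
    · intro hf
      have hadj : G.Adj u v := (G.mem_edgeSet).1 (mem_edgeFinset.1 (hF hf))
      refine ⟨hadj, fun hc => ?_⟩
      exact ((col_adj hT F vstar hadj).1 hc) hf

end Aux

theorem stmt4 [Fintype V] (G : SimpleGraph V) (hT : G.IsTree) (vstar : V) :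
    Set.BijOn (fun c => multiEdges G c)
      {c : V → Bool | majStep G c = c ∧ c vstar = false}
      {F | legalFix G F} := by
  classical
  refine ⟨?_, ?_, ?_⟩
  · -- MapsTo
    rintro c ⟨hfix, -⟩
    have hle := fixed_iff.1 hfix
    show legalFix G (multiEdges G c)
    constructor
    · -- multiEdges ⊆ Etwo
      intro e he
      have he' := he
      unfold multiEdges at he'
      rw [Finset.mem_filter] at he'
      unfold Etwo
      rw [Finset.mem_filter]
      refine ⟨he'.1, ?_⟩
      induction e using Sym2.ind with
      | _ u v =>
        have hm := mem_multiEdges.1 he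
        intro x hx
        rw [Sym2.mem_iff] at hx
        have key : ∀ a b : V, G.Adj a b → c a ≠ c b → 2 ≤ G.degree a := by
          intro a b hadj hne
          have h1 : 1 ≤ diffCount G c a := by
            rw [diffCount]
            refine Finset.card_pos.2 ⟨b, ?_⟩
            rw [Finset.mem_filter, mem_neighborFinset]
            exact ⟨hadj, fun hh => hne hh.symm⟩
          have h2 := hle a
          have h3 := same_add_diff G c a
          omega
        rcases hx with rfl | rfl
        · exact key x v hm.1 hm.2
        · exact key x u hm.1.symm (fun hh => hm.2 hh.symm)
    · intro v
      have h1 := hle v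
      have h2 := same_add_diff G c v
      have h3 := diff_eq_inc G c v
      omega
  · -- InjOn
    rintro c ⟨hfix, hc0⟩ c' ⟨hfix', hc'0⟩ hme
    simp only at hme
    have key : ∀ {a b : V} (p : G.Walk a b), c a = c' a → c b = c' b := by
      intro a b p
      induction p with
      | nil => exact id
      | @cons x y z hadj p ih =>
        intro hxy
        apply ih
        have h1 : (c x ≠ c y) ↔ (c' x ≠ c' y) := by
          have e1 := mem_multiEdges (G := G) (c := c) (u := x) (v := y)
          have e2 := mem_multiEdges (G := G) (c := c') (u := x) (v := y)
          rw [hme] at e1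
          have e3 := e1.symm.trans e2
          constructor
          · intro hd; exact (e3.1 ⟨hadj, hd⟩).2
          · intro hd; exact (e3.2 ⟨hadj, hd⟩).2
        revert h1 hxy
        cases c x <;> cases c y <;> cases c' x <;> cases c' y <;> simp
    funext v
    exact (hT.isConnected.preconnected vstar v).elim fun p => key p (by rw [hc0, hc'0])
  · -- SurjOn
    intro F hF
    have hFe : F ⊆ G.edgeFinset := fun e he => (Finset.mem_filter.1 (hF.1 he)).1
    refine ⟨col hT F vstar, ⟨?_, col_vstar hT F vstar⟩, multiEdges_col hT F hFe vstar⟩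
    rw [fixed_iff]
    intro v
    have h1 := hF.2 v
    have h2 := same_add_diff G (col hT F vstar) v
    have h3 := diff_eq_inc G (col hT F vstar) v
    rw [multiEdges_col hT F hFe vstar] at h3
    omega
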